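/- Let G ∼ RIG(n,d,p) where 1−p = (1−δ²)^d = Ω(1). Then the expected signed triangle count satisfies E[T_s(G)] = C(n,3)·(1−p)³·(dδ³ + O(dδ⁴)); that is, |E[T_s(G)] − C(n,3)·(1−p)³·dδ³| = O(C(n,3)·(1−p)³·dδ⁴) as n → ∞. -/

import Mathlib

set_option maxHeartbeats 1000000


open MeasureTheory Filter

noncomputable section

/-- Total variation distance between two measures. -/
def tvDist {α : Type*} [MeasurableSpace α] (μ ν : Measure α) : ℝ :=
  ⨆ s : Set α, |(μ s).toReal - (ν s).toReal|

/-- The Bernoulli measure on `Bool` with success probability `p`. -/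
def bern (p : ℝ) : Measure Bool :=
  ENNReal.ofReal p • Measure.dirac true + ENNReal.ofReal (1 - p) • Measure.dirac false

/-- Index type for potential edges of a graph on `Fin n`. -/
abbrev PairIdx (n : ℕ) := {e : Fin n × Fin n // e.1 < e.2}

/-- Erdős–Rényi graph `G(n,p)`, as a measure on edge indicator functions. -/
def erdosRenyi (n : ℕ) (p : ℝ) : Measure (PairIdx n → Bool) :=
  Measure.pi fun _ => bern p

/-- Membership configuration of `n` independent `δ`-random subsets of `{1,…,d}`. -/
def rigConfig (n d : ℕ) (δ : ℝ) : Measure (Fin n → Fin d → Bool) :=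
  Measure.pi fun _ => Measure.pi fun _ => bern δ

/-- Cardinality of `S_i ∩ S_j` for a membership configuration. -/
def interCard {n d : ℕ} (x : Fin n → Fin d → Bool) (i j : Fin n) : ℕ :=
  (Finset.univ.filter fun k => x i k = true ∧ x j k = true).card

/-- The τ-random intersection graph: edge `{i,j}` present iff `|S_i ∩ S_j| ≥ τ`. -/
def rigTau (n d : ℕ) (δ : ℝ) (τ : ℕ) : Measure (PairIdx n → Bool) :=
  (rigConfig n d δ).map fun x e => decide (τ ≤ interCard x e.1.1 e.1.2)

/-- The random intersection graph `RIG(n,d,p)` where `p = 1 - (1-δ²)^d`. -/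
def rig (n d : ℕ) (δ : ℝ) : Measure (PairIdx n → Bool) := rigTau n d δ 1

/-- Edge indicator (as a real number) of the unordered pair `{i,j}` in a graph. -/
def edgeVal {n : ℕ} (g : PairIdx n → Bool) (i j : Fin n) : ℝ :=
  if h : i < j then (if g ⟨(i, j), h⟩ then 1 else 0)
  else if h' : j < i then (if g ⟨(j, i), h'⟩ then 1 else 0)
  else 0

/-- Ordered triples `i < j < k` of vertices. -/
def triples (n : ℕ) : Finset (Fin n × Fin n × Fin n) :=
  Finset.univ.filter fun t => t.1 < t.2.1 ∧ t.2.1 < t.2.2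

/-- The signed triangle count
`T_s(G) = ∑_{i<j<k} (e_{ij}-p)(e_{ik}-p)(e_{jk}-p)`. -/
def signedTriangles {n : ℕ} (p : ℝ) (g : PairIdx n → Bool) : ℝ :=
  ∑ t ∈ triples n,
    (edgeVal g t.1 t.2.1 - p) * (edgeVal g t.1 t.2.2 - p) * (edgeVal g t.2.1 t.2.2 - p)


namespace RigHelper


lemma bern_prob {δ : ℝ} (h0 : 0 ≤ δ) (h1 : δ ≤ 1) : IsProbabilityMeasure (bern δ) := by
  constructor
  simp [bern, ← ENNReal.ofReal_add h0 (by linarith : (0:ℝ) ≤ 1 - δ)]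

instance bern_fin (p : ℝ) : IsFiniteMeasure (bern p) := by
  constructor
  simp only [bern, Measure.add_apply, Measure.smul_apply, smul_eq_mul]
  finiteness

lemma integral_bern {δ : ℝ} (h0 : 0 ≤ δ) (h1 : δ ≤ 1) (f : Bool → ℝ) :
    ∫ b, f b ∂(bern δ) = δ * f true + (1 - δ) * f false := by
  haveI h2 : IsFiniteMeasure (ENNReal.ofReal δ • Measure.dirac (true : Bool)) := by
    constructor; simp only [Measure.smul_apply, smul_eq_mul]; finiteness
  haveI h3 : IsFiniteMeasure (ENNReal.ofReal (1-δ) • Measure.dirac (false : Bool)) := by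
    constructor; simp only [Measure.smul_apply, smul_eq_mul]; finiteness
  rw [bern, integral_add_measure (Integrable.of_finite) (Integrable.of_finite),
    integral_smul_measure, integral_smul_measure, integral_dirac, integral_dirac,
    ENNReal.toReal_ofReal h0, ENNReal.toReal_ofReal (by linarith)]
  simp [smul_eq_mul]

lemma integral_pi_prod {ι : Type*} [Fintype ι] {α : Type*} [MeasurableSpace α]
    (μ : Measure α) [SigmaFinite μ] (f : ι → α → ℝ) :
    ∫ x : ι → α, ∏ i, f i (x i) ∂(Measure.pi fun _ => μ) = ∏ i, ∫ a, f i a ∂μ := by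
  letI : MeasureSpace α := ⟨μ⟩
  exact MeasureTheory.integral_fintype_prod_eq_prod f

/-- integral over the pi-bernoulli measure of a parametrized product of per-coordinate
functions. -/
lemma int_prod_param {δ : ℝ} (h0 : 0 ≤ δ) (h1 : δ ≤ 1) {d : ℕ} {γ : Type*}
    (c : Fin d → γ) (h : γ → Bool → ℝ) :
    ∫ u : Fin d → Bool, ∏ ℓ, h (c ℓ) (u ℓ) ∂(Measure.pi fun _ => bern δ) =
      ∏ ℓ, (δ * h (c ℓ) true + (1 - δ) * h (c ℓ) false) := by
  rw [integral_pi_prod (bern δ) (fun ℓ b => h (c ℓ) b)]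
  exact Finset.prod_congr rfl fun ℓ _ => integral_bern h0 h1 _

def b2r (b : Bool) : ℝ := if b then 1 else 0

lemma b2r_true : b2r true = 1 := rfl
lemma b2r_false : b2r false = 0 := rfl

def Zd {d : ℕ} (s t : Fin d → Bool) : ℝ := ∏ ℓ, (1 - b2r (s ℓ) * b2r (t ℓ))

def Af (δ : ℝ) {d : ℕ} (s : Fin d → Bool) : ℝ := ∏ ℓ, (1 - δ * b2r (s ℓ))

def Pf (δ : ℝ) {d : ℕ} (s t : Fin d → Bool) : ℝ :=
  ∏ ℓ, (δ * (1 - b2r (s ℓ)) * (1 - b2r (t ℓ)) + (1 - δ))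

def Rf (δ : ℝ) {d : ℕ} (s : Fin d → Bool) : ℝ :=
  ∏ ℓ, (δ * (1 - δ) + (1 - δ) * (δ * (1 - b2r (s ℓ)) + (1 - δ)))

def Sf (δ : ℝ) {d : ℕ} (s : Fin d → Bool) : ℝ :=
  ∏ ℓ, (δ * (1 - δ) * (1 - b2r (s ℓ)) + (1 - δ))

def Tf (δ : ℝ) {d : ℕ} (s : Fin d → Bool) : ℝ :=
  ∏ ℓ, (δ * (1 - δ) * (1 - b2r (s ℓ)) + (1 - δ) * (δ * (1 - b2r (s ℓ)) + (1 - δ)))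

variable {δ : ℝ} {d : ℕ}

lemma hZint (h0 : 0 ≤ δ) (h1 : δ ≤ 1) (s : Fin d → Bool) :
    ∫ u, Zd s u ∂(Measure.pi fun _ => bern δ) = Af δ s := by
  refine (int_prod_param h0 h1 s (fun a b => 1 - b2r a * b2r b)).trans ?_
  exact Finset.prod_congr rfl fun ℓ _ => by simp [b2r_true, b2r_false]; try ring

lemma hZZint (h0 : 0 ≤ δ) (h1 : δ ≤ 1) (s t : Fin d → Bool) :
    ∫ u, Zd s u * Zd t u ∂(Measure.pi fun _ => bern δ) = Pf δ s t := by
  have e : (fun u => Zd s u * Zd t u) = fun u : Fin d → Bool =>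
      ∏ ℓ, (fun (a : Bool × Bool) (b : Bool) =>
        (1 - b2r a.1 * b2r b) * (1 - b2r a.2 * b2r b)) (s ℓ, t ℓ) (u ℓ) := by
    funext u; rw [Zd, Zd, ← Finset.prod_mul_distrib]
  rw [e]
  refine (int_prod_param h0 h1 (fun ℓ => (s ℓ, t ℓ))
    (fun a b => (1 - b2r a.1 * b2r b) * (1 - b2r a.2 * b2r b))).trans ?_
  exact Finset.prod_congr rfl fun ℓ _ => by simp [b2r_true, b2r_false]; try ring

lemma hAint (h0 : 0 ≤ δ) (h1 : δ ≤ 1) :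
    ∫ t : Fin d → Bool, Af δ t ∂(Measure.pi fun _ => bern δ) = (1 - δ^2)^d := by
  refine (int_prod_param h0 h1 (fun _ : Fin d => ()) (fun _ b => 1 - δ * b2r b)).trans ?_
  rw [Finset.prod_congr rfl (fun ℓ _ => by simp [b2r_true, b2r_false]; try ring :
    ∀ ℓ ∈ Finset.univ, (δ * ((fun _ b => 1 - δ * b2r b) () true) +
      (1-δ) * ((fun _ b => 1 - δ * b2r b) () false)) = 1 - δ^2)]
  simp

lemma hPint (h0 : 0 ≤ δ) (h1 : δ ≤ 1) (s : Fin d → Bool) :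
    ∫ t, Pf δ s t ∂(Measure.pi fun _ => bern δ) = Rf δ s := by
  refine (int_prod_param h0 h1 s
    (fun a b => δ * (1 - b2r a) * (1 - b2r b) + (1 - δ))).trans ?_
  exact Finset.prod_congr rfl fun ℓ _ => by simp [b2r_true, b2r_false]; try ring

lemma hZAint (h0 : 0 ≤ δ) (h1 : δ ≤ 1) (s : Fin d → Bool) :
    ∫ t, Zd s t * Af δ t ∂(Measure.pi fun _ => bern δ) = Sf δ s := by
  have e : (fun t => Zd s t * Af δ t) = fun t : Fin d → Bool =>
      ∏ ℓ, (fun (a : Bool) (b : Bool) => (1 - b2r a * b2r b) * (1 - δ * b2r b)) (s ℓ) (t ℓ) := by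
    funext t; rw [Zd, Af, ← Finset.prod_mul_distrib]
  rw [e]
  refine ((int_prod_param h0 h1 s
    (fun a b => (1 - b2r a * b2r b) * (1 - δ * b2r b))).trans ?_)
  refine Finset.prod_congr rfl fun ℓ _ => ?_
  cases s ℓ <;> simp [b2r_true, b2r_false] <;> try ring

lemma hZPint (h0 : 0 ≤ δ) (h1 : δ ≤ 1) (s : Fin d → Bool) :
    ∫ t, Zd s t * Pf δ s t ∂(Measure.pi fun _ => bern δ) = Tf δ s := by
  have e : (fun t => Zd s t * Pf δ s t) = fun t : Fin d → Bool =>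
      ∏ ℓ, (fun (a : Bool) (b : Bool) =>
        (1 - b2r a * b2r b) * (δ * (1 - b2r a) * (1 - b2r b) + (1 - δ))) (s ℓ) (t ℓ) := by
    funext t; rw [Zd, Pf, ← Finset.prod_mul_distrib]
  rw [e]
  refine ((int_prod_param h0 h1 s
    (fun a b => (1 - b2r a * b2r b) * (δ * (1 - b2r a) * (1 - b2r b) + (1 - δ)))).trans ?_)
  refine Finset.prod_congr rfl fun ℓ _ => ?_
  cases s ℓ <;> simp [b2r_true, b2r_false] <;> try ring

lemma hRint (h0 : 0 ≤ δ) (h1 : δ ≤ 1) :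
    ∫ s : Fin d → Bool, Rf δ s ∂(Measure.pi fun _ => bern δ) = (1 - 2*δ^2 + δ^3)^d := by
  refine (int_prod_param h0 h1 (fun _ : Fin d => ())
    (fun _ b => δ * (1 - δ) + (1 - δ) * (δ * (1 - b2r b) + (1 - δ)))).trans ?_
  rw [Finset.prod_congr rfl (fun ℓ _ => by simp [b2r_true, b2r_false]; try ring :
    ∀ ℓ ∈ Finset.univ, (δ * (δ * (1 - δ) + (1 - δ) * (δ * (1 - b2r true) + (1 - δ))) +
      (1-δ) * (δ * (1 - δ) + (1 - δ) * (δ * (1 - b2r false) + (1 - δ)))) = 1 - 2*δ^2 + δ^3)]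
  simp

lemma hSint (h0 : 0 ≤ δ) (h1 : δ ≤ 1) :
    ∫ s : Fin d → Bool, Sf δ s ∂(Measure.pi fun _ => bern δ) = (1 - 2*δ^2 + δ^3)^d := by
  refine (int_prod_param h0 h1 (fun _ : Fin d => ())
    (fun _ b => δ * (1 - δ) * (1 - b2r b) + (1 - δ))).trans ?_
  rw [Finset.prod_congr rfl (fun ℓ _ => by simp [b2r_true, b2r_false]; try ring :
    ∀ ℓ ∈ Finset.univ, (δ * (δ * (1 - δ) * (1 - b2r true) + (1 - δ)) +
      (1-δ) * (δ * (1 - δ) * (1 - b2r false) + (1 - δ))) = 1 - 2*δ^2 + δ^3)]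
  simp

lemma hTint (h0 : 0 ≤ δ) (h1 : δ ≤ 1) :
    ∫ s : Fin d → Bool, Tf δ s ∂(Measure.pi fun _ => bern δ) = (1 - 3*δ^2 + 2*δ^3)^d := by
  refine (int_prod_param h0 h1 (fun _ : Fin d => ())
    (fun _ b => δ * (1 - δ) * (1 - b2r b) + (1 - δ) * (δ * (1 - b2r b) + (1 - δ)))).trans ?_
  rw [Finset.prod_congr rfl (fun ℓ _ => by simp [b2r_true, b2r_false]; try ring :
    ∀ ℓ ∈ Finset.univ,
      (δ * (δ * (1 - δ) * (1 - b2r true) + (1 - δ) * (δ * (1 - b2r true) + (1 - δ))) +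
      (1-δ) * (δ * (1 - δ) * (1 - b2r false) + (1 - δ) * (δ * (1 - b2r false) + (1 - δ))))
        = 1 - 3*δ^2 + 2*δ^3)]
  simp

lemma hAAint (h0 : 0 ≤ δ) (h1 : δ ≤ 1) :
    ∫ s : Fin d → Bool, Af δ s * Af δ s ∂(Measure.pi fun _ => bern δ)
      = (1 - 2*δ^2 + δ^3)^d := by
  have e : (fun s : Fin d → Bool => Af δ s * Af δ s) = fun s : Fin d → Bool =>
      ∏ ℓ, (fun (_ : Unit) (b : Bool) => (1 - δ * b2r b) * (1 - δ * b2r b)) () (s ℓ) := by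
    funext s; rw [Af, ← Finset.prod_mul_distrib]
  rw [e]
  refine (int_prod_param h0 h1 (fun _ : Fin d => ())
    (fun _ b => (1 - δ * b2r b) * (1 - δ * b2r b))).trans ?_
  rw [Finset.prod_congr rfl (fun ℓ _ => by simp [b2r_true, b2r_false]; try ring :
    ∀ ℓ ∈ Finset.univ, (δ * ((1 - δ * b2r true) * (1 - δ * b2r true)) +
      (1-δ) * ((1 - δ * b2r false) * (1 - δ * b2r false))) = 1 - 2*δ^2 + δ^3)]
  simp

lemma triple_exp (h0 : 0 ≤ δ) (h1 : δ ≤ 1) (q : ℝ) :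
    ∫ s, ∫ t, ∫ u, (q - Zd s t) * (q - Zd s u) * (q - Zd t u)
        ∂(Measure.pi fun _ : Fin d => bern δ) ∂(Measure.pi fun _ : Fin d => bern δ)
        ∂(Measure.pi fun _ : Fin d => bern δ) =
      q^3 - 3*q^2*(1-δ^2)^d + 3*q*(1-2*δ^2+δ^3)^d - (1-3*δ^2+2*δ^3)^d := by
  haveI := bern_prob h0 h1
  haveI : IsProbabilityMeasure (Measure.pi fun _ : Fin d => bern δ) := by infer_instance
  set ν : Measure (Fin d → Bool) := Measure.pi fun _ => bern δ with hν
  have inner : ∀ s t : Fin d → Bool, ∫ u, (q - Zd s t) * (q - Zd s u) * (q - Zd t u) ∂ν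
      = (q - Zd s t) * ((q^2 - q * Af δ s - q * Af δ t) + Pf δ s t) := by
    intro s t
    rw [show (fun u => (q - Zd s t) * (q - Zd s u) * (q - Zd t u))
        = fun u => (q - Zd s t) * ((q - Zd s u) * (q - Zd t u)) from by funext u; ring,
      integral_const_mul]
    congr 1
    rw [show (fun u => (q - Zd s u) * (q - Zd t u))
        = fun u => (q*q - q * Zd s u - q * Zd t u) + Zd s u * Zd t u from by funext u; ring,
      integral_add (Integrable.of_finite) (Integrable.of_finite),
      integral_sub (Integrable.of_finite) (Integrable.of_finite),
      integral_sub (Integrable.of_finite) (Integrable.of_finite),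
      integral_const, integral_const_mul, integral_const_mul,
      hZint h0 h1 s, hZint h0 h1 t, hZZint h0 h1 s t]
    simp [measure_univ]; try ring
  have middle : ∀ s : Fin d → Bool,
      ∫ t, (q - Zd s t) * ((q^2 - q * Af δ s - q * Af δ t) + Pf δ s t) ∂ν
      = ((((((q^3 - q^2 * Af δ s) - q^2 * (1-δ^2)^d) + q * Rf δ s)
          - (q^2 - q * Af δ s) * Af δ s) + q * Sf δ s) - Tf δ s) := by
    intro s
    rw [show (fun t => (q - Zd s t) * ((q^2 - q * Af δ s - q * Af δ t) + Pf δ s t))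
        = fun t => (((((q^3 - q^2 * Af δ s) - q^2 * Af δ t) + q * Pf δ s t)
            - (q^2 - q * Af δ s) * Zd s t) + q * (Zd s t * Af δ t)) - Zd s t * Pf δ s t from by
          funext t; ring,
      integral_sub (Integrable.of_finite) (Integrable.of_finite),
      integral_add (Integrable.of_finite) (Integrable.of_finite),
      integral_sub (Integrable.of_finite) (Integrable.of_finite),
      integral_add (Integrable.of_finite) (Integrable.of_finite),
      integral_sub (Integrable.of_finite) (Integrable.of_finite),
      integral_const, integral_const_mul, integral_const_mul, integral_const_mul,
      integral_const_mul, hAint h0 h1, hPint h0 h1 s, hZint h0 h1 s, hZAint h0 h1 s,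
      hZPint h0 h1 s]
    simp [measure_univ]; try ring
  simp only [inner, middle]
  rw [integral_sub (Integrable.of_finite) (Integrable.of_finite),
    integral_add (Integrable.of_finite) (Integrable.of_finite),
    integral_sub (Integrable.of_finite) (Integrable.of_finite),
    integral_add (Integrable.of_finite) (Integrable.of_finite),
    integral_sub (Integrable.of_finite) (Integrable.of_finite),
    integral_sub (Integrable.of_finite) (Integrable.of_finite),
    integral_const, integral_const_mul, integral_const_mul, integral_const_mul,
    integral_const_mul]
  rw [show (fun s : Fin d → Bool => (q^2 - q * Af δ s) * Af δ s)
      = fun s : Fin d → Bool => q^2 * Af δ s - q * (Af δ s * Af δ s) from by funext s; ring,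
    integral_sub (Integrable.of_finite) (Integrable.of_finite),
    integral_const_mul, integral_const_mul,
    hAint h0 h1, hRint h0 h1, hSint h0 h1, hTint h0 h1, hAAint h0 h1]
  simp [measure_univ]; try ring


variable {α : Type*} [MeasurableSpace α] [Fintype α] [MeasurableSingletonClass α]

lemma pi_map_tripleEval (ν : Measure α) [IsProbabilityMeasure ν] {n : ℕ} {i j k : Fin n}
    (hij : i ≠ j) (hik : i ≠ k) (hjk : j ≠ k) :
    (Measure.pi fun _ : Fin n => ν).map (fun x => (x i, x j, x k)) = ν.prod (ν.prod ν) := by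
  apply Measure.ext_of_singleton
  rintro ⟨s, t, u⟩
  rw [Measure.map_apply (by fun_prop) (measurableSet_singleton _)]
  have hset : (fun x : Fin n → α => (x i, x j, x k)) ⁻¹' {(s, t, u)} =
      Set.univ.pi (fun m => if m = i then {s} else if m = j then {t}
        else if m = k then {u} else Set.univ) := by
    ext x
    simp only [Set.mem_preimage, Set.mem_singleton_iff, Prod.mk.injEq, Set.mem_pi,
      Set.mem_univ, forall_true_left]
    constructor
    · rintro ⟨h1, h2, h3⟩ m
      subst h1 h2 h3; split_ifs <;> simp_all
    · intro h
      refine ⟨?_, ?_, ?_⟩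
      · have := h i; simpa using this
      · have := h j; rw [if_neg (Ne.symm hij), if_pos rfl] at this; simpa using this
      · have := h k; rw [if_neg (Ne.symm hik), if_neg (Ne.symm hjk), if_pos rfl] at this
        simpa using this
  rw [hset, Measure.pi_pi]
  have hrw : ∀ m : Fin n, ν (if m = i then {s} else if m = j then {t}
      else if m = k then {u} else Set.univ) =
      if m = i then ν {s} else if m = j then ν {t} else if m = k then ν {u} else 1 := by
    intro m; split_ifs <;> simp
  simp only [hrw]
  have hsub : ∏ m : Fin n, (if m = i then ν {s} else if m = j then ν {t}
      else if m = k then ν {u} else 1) = ∏ m ∈ ({i, j, k} : Finset (Fin n)),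
      (if m = i then ν {s} else if m = j then ν {t} else if m = k then ν {u} else 1) := by
    symm
    apply Finset.prod_subset (Finset.subset_univ _)
    intro m _ hm
    simp only [Finset.mem_insert, Finset.mem_singleton, not_or] at hm
    rw [if_neg hm.1, if_neg hm.2.1, if_neg hm.2.2]
  rw [hsub, Finset.prod_insert (by simp [hij, hik]), Finset.prod_insert (by simp [hjk]),
    Finset.prod_singleton, if_pos rfl, if_neg (Ne.symm hij), if_pos rfl,
    if_neg (Ne.symm hik), if_neg (Ne.symm hjk), if_pos rfl]
  rw [show ({(s, t, u)} : Set (α × α × α)) = {s} ×ˢ ({t} ×ˢ {u}) by ext ⟨a,b,c⟩; simp [Prod.ext_iff, and_assoc]]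
  rw [Measure.prod_prod, Measure.prod_prod]

lemma integral_pi_triple (ν : Measure α) [IsProbabilityMeasure ν] {n : ℕ} {i j k : Fin n}
    (hij : i ≠ j) (hik : i ≠ k) (hjk : j ≠ k) (Φ : α → α → α → ℝ) :
    ∫ x, Φ (x i) (x j) (x k) ∂(Measure.pi fun _ : Fin n => ν) =
      ∫ s, ∫ t, ∫ u, Φ s t u ∂ν ∂ν ∂ν := by
  have : ∫ x, Φ (x i) (x j) (x k) ∂(Measure.pi fun _ : Fin n => ν) =
      ∫ z : α × α × α, Φ z.1 z.2.1 z.2.2 ∂((Measure.pi fun _ : Fin n => ν).map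
        (fun x => (x i, x j, x k))) := by
    rw [integral_map (by fun_prop) ((measurable_of_countable _).aestronglyMeasurable)]
  rw [this, pi_map_tripleEval ν hij hik hjk, integral_prod _ (Integrable.of_finite)]
  congr 1; ext s
  rw [integral_prod _ (Integrable.of_finite)]



lemma trip_inj {n : ℕ} {i j k i' j' k' : Fin n} (hij : i < j) (hjk : j < k)
    (hij' : i' < j') (hjk' : j' < k')
    (h : ({i, j, k} : Finset (Fin n)) = {i', j', k'}) : i = i' ∧ j = j' ∧ k = k' := by
  have mem1 : ∀ x : Fin n, x ∈ ({i, j, k} : Finset (Fin n)) ↔ (x = i ∨ x = j ∨ x = k) := by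
    intro x; simp [Finset.mem_insert]
  have mem2 : ∀ x : Fin n, x ∈ ({i', j', k'} : Finset (Fin n)) ↔ (x = i' ∨ x = j' ∨ x = k') := by
    intro x; simp [Finset.mem_insert]
  have h1 : i' = i ∨ i' = j ∨ i' = k := by
    rw [← mem1, h, mem2]; left; rfl
  have h2 : i = i' ∨ i = j' ∨ i = k' := by
    rw [← mem2, ← h, mem1]; left; rfl
  have h3 : k' = i ∨ k' = j ∨ k' = k := by
    rw [← mem1, h, mem2]; right; right; rfl
  have h4 : k = i' ∨ k = j' ∨ k = k' := by
    rw [← mem2, ← h, mem1]; right; right; rfl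
  have hii : i = i' := by
    have lei : i ≤ i' := by
      rcases h1 with rfl | rfl | rfl
      · exact le_refl _
      · exact le_of_lt hij
      · exact le_of_lt (lt_trans hij hjk)
    have lei' : i' ≤ i := by
      rcases h2 with rfl | rfl | rfl
      · exact le_refl _
      · exact le_of_lt hij'
      · exact le_of_lt (lt_trans hij' hjk')
    exact le_antisymm lei lei'
  have hkk : k = k' := by
    have lek : k' ≤ k := by
      rcases h3 with rfl | rfl | rfl
      · exact le_of_lt (lt_trans hij hjk)
      · exact le_of_lt hjk
      · exact le_refl _
    have lek' : k ≤ k' := by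
      rcases h4 with rfl | rfl | rfl
      · exact le_of_lt (lt_trans hij' hjk')
      · exact le_of_lt hjk'
      · exact le_refl _
    exact le_antisymm lek' lek
  refine ⟨hii, ?_, hkk⟩
  have h5 : j = i' ∨ j = j' ∨ j = k' := by
    rw [← mem2, ← h, mem1]; right; left; rfl
  rcases h5 with h5 | h5 | h5
  · exact absurd (hii ▸ hij) (h5 ▸ lt_irrefl j)
  · exact h5
  · exact absurd (hkk ▸ hjk) (h5 ▸ lt_irrefl j)

lemma card_triples (n : ℕ) : (triples n).card = n.choose 3 := by
  have : (triples n).card = (Finset.powersetCard 3 (Finset.univ : Finset (Fin n))).card := by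
    apply Finset.card_bij (fun t _ => ({t.1, t.2.1, t.2.2} : Finset (Fin n)))
    · rintro ⟨i, j, k⟩ ht
      simp only [triples, Finset.mem_filter] at ht
      obtain ⟨-, hij, hjk⟩ := ht
      rw [Finset.mem_powersetCard]
      refine ⟨Finset.subset_univ _, ?_⟩
      rw [Finset.card_insert_of_notMem (by
          simp only [Finset.mem_insert, Finset.mem_singleton]
          push_neg
          exact ⟨ne_of_lt hij, ne_of_lt (lt_trans hij hjk)⟩),
        Finset.card_insert_of_notMem (by simp [ne_of_lt hjk]), Finset.card_singleton]
    · rintro ⟨i, j, k⟩ ht ⟨i', j', k'⟩ ht' heq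
      simp only [triples, Finset.mem_filter] at ht ht'
      obtain ⟨hii, hjj, hkk⟩ := trip_inj ht.2.1 ht.2.2 ht'.2.1 ht'.2.2 heq
      simp [hii, hjj, hkk]
    · intro s hs
      rw [Finset.mem_powersetCard] at hs
      obtain ⟨-, hcard⟩ := hs
      let f := s.orderIsoOfFin hcard
      have h01 : (f 0 : Fin n) < f 1 := f.strictMono (by decide : (0 : Fin 3) < 1)
      have h12 : (f 1 : Fin n) < f 2 := f.strictMono (by decide : (1 : Fin 3) < 2)
      refine ⟨((f 0 : Fin n), (f 1 : Fin n), (f 2 : Fin n)), ?_, ?_⟩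
      · simp only [triples, Finset.mem_filter]
        exact ⟨Finset.mem_univ _, h01, h12⟩
      · apply Finset.eq_of_subset_of_card_le
        · intro x hx
          simp only [Finset.mem_insert, Finset.mem_singleton] at hx
          rcases hx with rfl | rfl | rfl <;> exact Finset.coe_mem _
        · rw [hcard, Finset.card_insert_of_notMem (by
              simp only [Finset.mem_insert, Finset.mem_singleton]
              push_neg
              exact ⟨ne_of_lt h01, ne_of_lt (lt_trans h01 h12)⟩),
            Finset.card_insert_of_notMem (by simp [ne_of_lt h12]), Finset.card_singleton]
  rw [this, Finset.card_powersetCard, Finset.card_univ, Fintype.card_fin]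



def C0 (c : ℝ) : ℝ :=
  3 * (-Real.log c) * Real.exp ((-Real.log c) / c^2) / c^4
    + 4 * (-Real.log c) * Real.exp (2 * (-Real.log c) / c^3) / c^6 + 2 / c^3

lemma C0_pos {c : ℝ} (hc0 : 0 < c) (hc1 : c ≤ 1) : 0 < C0 c := by
  have hL : 0 ≤ -Real.log c := by
    have := Real.log_nonpos hc0.le hc1; linarith
  have h1 : 0 ≤ 3 * (-Real.log c) * Real.exp ((-Real.log c) / c^2) / c^4 :=
    div_nonneg (by positivity) (by positivity)
  have h2 : 0 ≤ 4 * (-Real.log c) * Real.exp (2 * (-Real.log c) / c^3) / c^6 :=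
    div_nonneg (by positivity) (by positivity)
  have h3 : 0 < 2 / c^3 := by positivity
  unfold C0; linarith

lemma exp_quad {y : ℝ} (hy : 0 ≤ y) : Real.exp y ≤ 1 + y + y^2 * Real.exp y := by
  have h1 : (1 - y) * Real.exp y ≤ 1 := by
    have h := Real.add_one_le_exp (-y)
    have hp := (Real.exp_pos y).le
    calc (1 - y) * Real.exp y ≤ Real.exp (-y) * Real.exp y := by nlinarith
      _ = 1 := by rw [← Real.exp_add]; simp
  nlinarith [Real.exp_pos y, mul_nonneg hy (Real.exp_pos y).le]

lemma pow_remainder {x : ℝ} (hx : 0 ≤ x) (d : ℕ) :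
    (1 + x)^d ≤ 1 + d*x + (d*x)^2 * Real.exp (d*x) := by
  have h1 : (1 + x : ℝ)^d ≤ Real.exp ((d:ℝ)*x) := by
    rw [show ((d:ℝ)*x) = ((d:ℕ):ℝ)*x from rfl, Real.exp_nat_mul]
    exact pow_le_pow_left₀ (by linarith) (by linarith [Real.add_one_le_exp x]) d
  calc (1 + x)^d ≤ Real.exp ((d:ℝ)*x) := h1
    _ ≤ 1 + (d:ℝ)*x + ((d:ℝ)*x)^2 * Real.exp ((d:ℝ)*x) := exp_quad (by positivity)

lemma analytic {c δ : ℝ} {d : ℕ} (hc0 : 0 < c) (hc1 : c ≤ 1)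
    (hδ0 : 0 < δ) (hδ1 : δ < 1) (hq : c ≤ (1 - δ^2)^d) :
    |((1-δ^2)^d)^3 - 3*((1-δ^2)^d)^2*(1-δ^2)^d + 3*((1-δ^2)^d)*(1-2*δ^2+δ^3)^d
        - (1-3*δ^2+2*δ^3)^d - ((1-δ^2)^d)^3 * ((d:ℝ)*δ^3)|
      ≤ C0 c * (((1-δ^2)^d)^3 * ((d:ℝ)*δ^4)) := by
  rcases Nat.eq_zero_or_pos d with rfl | hd
  · simp
  set L : ℝ := -Real.log c with hLdef
  have hL : 0 ≤ L := by
    have := Real.log_nonpos hc0.le hc1; simp [hLdef]; linarith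
  set a : ℝ := 1 - δ^2 with hadef
  have ha0 : 0 < a := by nlinarith
  have ha1 : a ≤ 1 := by nlinarith
  have hca : c ≤ a := hq.trans (pow_le_of_le_one ha0.le ha1 hd.ne')
  have hd2 : δ^2 ≤ 1 - c := by simp [hadef] at hca ⊢; linarith
  have hdd2 : (d:ℝ) * δ^2 ≤ L := by
    have h1 : a ≤ Real.exp (-δ^2) := by
      have := Real.add_one_le_exp (-δ^2); linarith
    have h2 : a^d ≤ Real.exp ((d:ℝ) * (-δ^2)) := by
      rw [Real.exp_nat_mul]
      exact pow_le_pow_left₀ ha0.le h1 d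
    have h3 : Real.log c ≤ (d:ℝ) * (-δ^2) :=
      (Real.log_le_iff_le_exp hc0).mpr (hq.trans h2)
    simp [hLdef]; nlinarith
  -- the relative perturbations
  set u : ℝ := δ^3 * (1 - δ) / a^2 with hudef
  set v : ℝ := δ^3 * (2 - 3*δ + δ^3) / a^3 with hvdef
  have hw0 : 0 ≤ 2 - 3*δ + δ^3 := by nlinarith
  have hw2 : 2 - 3*δ + δ^3 ≤ 2 := by nlinarith
  have hu0 : 0 ≤ u := div_nonneg (mul_nonneg (by positivity) (by linarith)) (by positivity)
  have hv0 : 0 ≤ v := div_nonneg (mul_nonneg (by positivity) hw0) (by positivity)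
  have hb : (1 - 2*δ^2 + δ^3) = a^2 * (1 + u) := by
    rw [hudef]; field_simp; rw [hadef]; ring
  have he : (1 - 3*δ^2 + 2*δ^3) = a^3 * (1 + v) := by
    rw [hvdef]; field_simp; rw [hadef]; ring
  -- factor the expression
  have hfact : ((1-δ^2)^d)^3 - 3*((1-δ^2)^d)^2*(1-δ^2)^d + 3*((1-δ^2)^d)*(1-2*δ^2+δ^3)^d
      - (1-3*δ^2+2*δ^3)^d - ((1-δ^2)^d)^3 * ((d:ℝ)*δ^3)
      = (a^d)^3 * ((3*(1+u)^d - (1+v)^d - 2) - (d:ℝ)*δ^3) := by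
    rw [← hadef, hb, he, mul_pow, mul_pow,
      show (a^2)^d = (a^d)^2 by rw [← pow_mul, ← pow_mul, mul_comm],
      show (a^3)^d = (a^d)^3 by rw [← pow_mul, ← pow_mul, mul_comm]]
    ring
  rw [hfact, abs_mul, abs_of_nonneg (by positivity : (0:ℝ) ≤ (a^d)^3),
    mul_comm (C0 c), mul_assoc]
  apply mul_le_mul_of_nonneg_left _ (by positivity : (0:ℝ) ≤ (a^d)^3)
  -- now bound |f - dδ³| ≤ C0 c * (d δ⁴)
  have hc2 : 0 < c^2 := by positivity
  have hc3 : 0 < c^3 := by positivity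
  have hXa : u ≤ δ^3 / c^2 := by
    apply div_le_div₀ (by positivity) (by nlinarith) (by positivity)
    exact pow_le_pow_left₀ hc0.le hca 2
  have hYa : v ≤ 2*δ^3 / c^3 := by
    apply div_le_div₀ (by positivity)
      (by nlinarith [mul_le_mul_of_nonneg_left hw2 (pow_nonneg hδ0.le 3)]) (by positivity)
    exact pow_le_pow_left₀ hc0.le hca 3
  have hX : (d:ℝ)*u ≤ L/c^2 := by
    have h1 : (d:ℝ)*u ≤ (d:ℝ)*(δ^3/c^2) :=
      mul_le_mul_of_nonneg_left hXa (Nat.cast_nonneg d)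
    have h2 : (d:ℝ)*(δ^3/c^2) = ((d:ℝ)*δ^2) * (δ/c^2) := by ring
    have h3 : ((d:ℝ)*δ^2) * (δ/c^2) ≤ L * (1/c^2) := by
      apply mul_le_mul hdd2 _ (by positivity) hL
      apply div_le_div₀ (by norm_num) hδ1.le hc2 le_rfl
    calc (d:ℝ)*u ≤ ((d:ℝ)*δ^2) * (δ/c^2) := by linarith
      _ ≤ L * (1/c^2) := h3
      _ = L/c^2 := by ring
  have hY : (d:ℝ)*v ≤ 2*L/c^3 := by
    have h1 : (d:ℝ)*v ≤ (d:ℝ)*(2*δ^3/c^3) :=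
      mul_le_mul_of_nonneg_left hYa (Nat.cast_nonneg d)
    have h2 : ((d:ℝ)*δ^2) * (2*δ/c^3) ≤ L * (2/c^3) := by
      apply mul_le_mul hdd2 _ (by positivity) hL
      apply div_le_div₀ (by norm_num) (by linarith) hc3 le_rfl
    calc (d:ℝ)*v ≤ ((d:ℝ)*δ^2) * (2*δ/c^3) := by
          rw [show ((d:ℝ)*δ^2) * (2*δ/c^3) = (d:ℝ)*(2*δ^3/c^3) by ring]; exact h1
      _ ≤ L * (2/c^3) := h2
      _ = 2*L/c^3 := by ring
  have hD0 : (0:ℝ) ≤ (d:ℝ)*δ^4 := by positivity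
  have hX2 : ((d:ℝ)*u)^2 ≤ L * ((d:ℝ)*δ^4) / c^4 := by
    have h1 : ((d:ℝ)*u)^2 ≤ ((d:ℝ)*(δ^3/c^2))^2 := by
      apply pow_le_pow_left₀ (mul_nonneg (Nat.cast_nonneg d) hu0)
      exact mul_le_mul_of_nonneg_left hXa (Nat.cast_nonneg d)
    have h2 : ((d:ℝ)*(δ^3/c^2))^2 = ((d:ℝ)*δ^2) * ((d:ℝ)*δ^4) / c^4 := by
      field_simp
    have h3 : ((d:ℝ)*δ^2) * ((d:ℝ)*δ^4) / c^4 ≤ L * ((d:ℝ)*δ^4) / c^4 := by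
      apply div_le_div_of_nonneg_right ?_ (by positivity)
      exact mul_le_mul_of_nonneg_right hdd2 hD0
    linarith
  have hY2 : ((d:ℝ)*v)^2 ≤ 4 * L * ((d:ℝ)*δ^4) / c^6 := by
    have h1 : ((d:ℝ)*v)^2 ≤ ((d:ℝ)*(2*δ^3/c^3))^2 := by
      apply pow_le_pow_left₀ (mul_nonneg (Nat.cast_nonneg d) hv0)
      exact mul_le_mul_of_nonneg_left hYa (Nat.cast_nonneg d)
    have h2 : ((d:ℝ)*(2*δ^3/c^3))^2 = 4 * (((d:ℝ)*δ^2) * ((d:ℝ)*δ^4)) / c^6 := by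
      field_simp; ring
    have h3 : 4 * (((d:ℝ)*δ^2) * ((d:ℝ)*δ^4)) / c^6 ≤ 4 * (L * ((d:ℝ)*δ^4)) / c^6 := by
      apply div_le_div_of_nonneg_right ?_ (by positivity)
      nlinarith [mul_le_mul_of_nonneg_right hdd2 hD0]
    calc ((d:ℝ)*v)^2 ≤ ((d:ℝ)*(2*δ^3/c^3))^2 := h1
      _ = 4 * (((d:ℝ)*δ^2) * ((d:ℝ)*δ^4)) / c^6 := h2
      _ ≤ 4 * (L * ((d:ℝ)*δ^4)) / c^6 := h3
      _ = 4 * L * ((d:ℝ)*δ^4) / c^6 := by ring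
  have hEX : Real.exp ((d:ℝ)*u) ≤ Real.exp (L/c^2) := Real.exp_le_exp.mpr hX
  have hEY : Real.exp ((d:ℝ)*v) ≤ Real.exp (2*L/c^3) := Real.exp_le_exp.mpr hY
  -- remainder bounds for the two binomials
  have hTu_low : 0 ≤ (1+u)^d - 1 - (d:ℝ)*u := by
    have := one_add_mul_le_pow (by linarith : (-2:ℝ) ≤ u) d
    linarith
  have hTv_low : 0 ≤ (1+v)^d - 1 - (d:ℝ)*v := by
    have := one_add_mul_le_pow (by linarith : (-2:ℝ) ≤ v) d
    linarith
  have hTu_up : (1+u)^d - 1 - (d:ℝ)*u ≤ L * Real.exp (L/c^2) / c^4 * ((d:ℝ)*δ^4) := by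
    have h1 := pow_remainder hu0 d
    have h2 : ((d:ℝ)*u)^2 * Real.exp ((d:ℝ)*u)
        ≤ (L * ((d:ℝ)*δ^4) / c^4) * Real.exp (L/c^2) :=
      mul_le_mul hX2 hEX (Real.exp_pos _).le (by positivity)
    calc (1+u)^d - 1 - (d:ℝ)*u ≤ ((d:ℝ)*u)^2 * Real.exp ((d:ℝ)*u) := by linarith
      _ ≤ (L * ((d:ℝ)*δ^4) / c^4) * Real.exp (L/c^2) := h2
      _ = L * Real.exp (L/c^2) / c^4 * ((d:ℝ)*δ^4) := by ring
  have hTv_up : (1+v)^d - 1 - (d:ℝ)*v ≤ 4 * L * Real.exp (2*L/c^3) / c^6 * ((d:ℝ)*δ^4) := by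
    have h1 := pow_remainder hv0 d
    have h2 : ((d:ℝ)*v)^2 * Real.exp ((d:ℝ)*v)
        ≤ (4 * L * ((d:ℝ)*δ^4) / c^6) * Real.exp (2*L/c^3) :=
      mul_le_mul hY2 hEY (Real.exp_pos _).le (by positivity)
    calc (1+v)^d - 1 - (d:ℝ)*v ≤ ((d:ℝ)*v)^2 * Real.exp ((d:ℝ)*v) := by linarith
      _ ≤ (4 * L * ((d:ℝ)*δ^4) / c^6) * Real.exp (2*L/c^3) := h2
      _ = 4 * L * Real.exp (2*L/c^3) / c^6 * ((d:ℝ)*δ^4) := by ring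
  -- the first-order term
  have hlin : (3*u - v) - δ^3 = δ^6 * (2 - 3*δ + δ^3) / a^3 := by
    rw [hudef, hvdef]; field_simp; ring
  have hlin0 : 0 ≤ (3*u - v) - δ^3 := by
    rw [hlin]
    exact div_nonneg (mul_nonneg (by positivity) hw0) (by positivity)
  have hlin_up : (d:ℝ) * ((3*u - v) - δ^3) ≤ 2 / c^3 * ((d:ℝ)*δ^4) := by
    have h1 : (3*u - v) - δ^3 ≤ 2 * δ^6 / c^3 := by
      rw [hlin]
      apply div_le_div₀ (by positivity)
        (by nlinarith [mul_le_mul_of_nonneg_left hw2 (pow_nonneg hδ0.le 6)]) (by positivity)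
      exact pow_le_pow_left₀ hc0.le hca 3
    have h2 : (d:ℝ) * ((3*u - v) - δ^3) ≤ (d:ℝ) * (2 * δ^6 / c^3) :=
      mul_le_mul_of_nonneg_left h1 (Nat.cast_nonneg d)
    have h3 : (d:ℝ) * (2 * δ^6 / c^3) ≤ 2 / c^3 * ((d:ℝ)*δ^4) := by
      rw [show (d:ℝ) * (2 * δ^6 / c^3) = 2 / c^3 * ((d:ℝ)*δ^4) * δ^2 by ring]
      have hE0 : (0:ℝ) ≤ 2/c^3 * ((d:ℝ)*δ^4) := by positivity
      have hEl := mul_le_mul_of_nonneg_left (show δ^2 ≤ 1 by nlinarith) hE0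
      rw [mul_one] at hEl
      exact hEl
    linarith
  -- assemble
  have key : |3*(1+u)^d - (1+v)^d - 2 - (d:ℝ)*δ^3| ≤ C0 c * ((d:ℝ)*δ^4) := by
    have expand : 3*(1+u)^d - (1+v)^d - 2 - (d:ℝ)*δ^3
        = 3*((1+u)^d - 1 - (d:ℝ)*u) - ((1+v)^d - 1 - (d:ℝ)*v)
          + (d:ℝ) * ((3*u - v) - δ^3) := by ring
    rw [expand, abs_le]
    have hCexp : C0 c * ((d:ℝ)*δ^4) = 3 * (L * Real.exp (L/c^2) / c^4 * ((d:ℝ)*δ^4))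
        + 4 * L * Real.exp (2*L/c^3) / c^6 * ((d:ℝ)*δ^4) + 2 / c^3 * ((d:ℝ)*δ^4) := by
      rw [C0, hLdef]; ring
    constructor
    · rw [hCexp]
      have e1 : 0 ≤ L * Real.exp (L/c^2) / c^4 * ((d:ℝ)*δ^4) := by positivity
      have e2 : 0 ≤ 2 / c^3 * ((d:ℝ)*δ^4) := by positivity
      have e3 : 0 ≤ (d:ℝ) * ((3*u - v) - δ^3) :=
        mul_nonneg (Nat.cast_nonneg d) hlin0
      linarith
    · rw [hCexp]
      have e1 : 0 ≤ 4 * L * Real.exp (2*L/c^3) / c^6 * ((d:ℝ)*δ^4) := by positivity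
      linarith
  calc |3*(1+u)^d - (1+v)^d - 2 - (d:ℝ)*δ^3| ≤ C0 c * ((d:ℝ)*δ^4) := key
    _ = (d:ℝ)*δ^4 * C0 c := by ring



lemma Zd_edge {n d : ℕ} (x : Fin n → Fin d → Bool) {i j : Fin n} (hij : i < j) :
    edgeVal (fun e : PairIdx n => decide (1 ≤ interCard x e.1.1 e.1.2)) i j
      = 1 - Zd (x i) (x j) := by
  rw [edgeVal, dif_pos hij]
  by_cases hex : ∃ ℓ, x i ℓ = true ∧ x j ℓ = true
  · have hcard : 1 ≤ interCard x i j := by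
      obtain ⟨ℓ, h1, h2⟩ := hex
      exact Finset.card_pos.mpr ⟨ℓ, Finset.mem_filter.mpr ⟨Finset.mem_univ _, h1, h2⟩⟩
    have hZ : Zd (x i) (x j) = 0 := by
      obtain ⟨ℓ, h1, h2⟩ := hex
      exact Finset.prod_eq_zero (Finset.mem_univ ℓ) (by simp [h1, h2, b2r])
    simp [hcard, hZ]
  · have hcard : interCard x i j = 0 := by
      rw [interCard, Finset.card_eq_zero, Finset.filter_eq_empty_iff]
      push_neg at hex
      intro ℓ _
      simpa using hex ℓ
    have hZ : Zd (x i) (x j) = 1 := by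
      apply Finset.prod_eq_one
      intro ℓ _
      push_neg at hex
      cases hxi : x i ℓ with
      | true => simp [b2r, hex ℓ hxi]
      | false => simp [b2r]
    simp [hcard, hZ]

lemma expectation_eq (n d : ℕ) {δ : ℝ} (p : ℝ) (h0 : 0 ≤ δ) (h1 : δ ≤ 1) :
    ∫ g, signedTriangles p g ∂(rig n d δ)
      = (n.choose 3 : ℝ) * ((1-p)^3 - 3*(1-p)^2*(1-δ^2)^d
          + 3*(1-p)*(1-2*δ^2+δ^3)^d - (1-3*δ^2+2*δ^3)^d) := by
  haveI hbp := bern_prob h0 h1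
  haveI : IsProbabilityMeasure (rigConfig n d δ) := by rw [rigConfig]; infer_instance
  rw [rig, rigTau, integral_map (measurable_of_countable _).aemeasurable
    (measurable_of_countable _).aestronglyMeasurable]
  have hsum : ∀ x : Fin n → Fin d → Bool,
      signedTriangles p (fun e : PairIdx n => decide (1 ≤ interCard x e.1.1 e.1.2))
        = ∑ t ∈ triples n, ((1-p) - Zd (x t.1) (x t.2.1)) * ((1-p) - Zd (x t.1) (x t.2.2))
            * ((1-p) - Zd (x t.2.1) (x t.2.2)) := by
    intro x
    rw [signedTriangles]
    apply Finset.sum_congr rfl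
    rintro ⟨i, j, k⟩ ht
    rw [triples, Finset.mem_filter] at ht
    obtain ⟨-, hij, hjk⟩ := ht
    rw [Zd_edge x hij, Zd_edge x (hij.trans hjk), Zd_edge x hjk]
    ring
  simp only [hsum]
  rw [integral_finset_sum _ (fun t _ => Integrable.of_finite)]
  have hterm : ∀ t ∈ triples n,
      (∫ x : Fin n → Fin d → Bool, ((1-p) - Zd (x t.1) (x t.2.1)) * ((1-p) - Zd (x t.1) (x t.2.2))
          * ((1-p) - Zd (x t.2.1) (x t.2.2)) ∂(rigConfig n d δ))
        = ((1-p)^3 - 3*(1-p)^2*(1-δ^2)^d + 3*(1-p)*(1-2*δ^2+δ^3)^d - (1-3*δ^2+2*δ^3)^d) := by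
    rintro ⟨i, j, k⟩ ht
    rw [triples, Finset.mem_filter] at ht
    obtain ⟨-, hij, hjk⟩ := ht
    haveI : IsProbabilityMeasure (Measure.pi fun _ : Fin d => bern δ) := inferInstance
    rw [rigConfig]
    refine Eq.trans (integral_pi_triple (Measure.pi fun _ : Fin d => bern δ)
      (ne_of_lt hij) (ne_of_lt (hij.trans hjk)) (ne_of_lt hjk)
      (fun s t u => ((1-p) - Zd s t) * ((1-p) - Zd s u) * ((1-p) - Zd t u))) ?_
    exact triple_exp h0 h1 (1-p)
  rw [Finset.sum_congr rfl hterm, Finset.sum_const, card_triples, nsmul_eq_mul]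

end RigHelper

open RigHelper in
/-- For `G ∼ RIG(n,d,p)` with `1-p = (1-δ²)^d = Ω(1)`,
`E[T_s(G)] = C(n,3) (1-p)³ (dδ³ + O(dδ⁴))`. -/
theorem rig_signedTriangles_expectation
    (p δ : ℕ → ℝ) (d : ℕ → ℕ)
    (hδ : ∀ n, 0 < δ n ∧ δ n < 1)
    (hrel : ∀ n, 1 - p n = (1 - δ n ^ 2) ^ d n)
    (hpbd : ∃ c > (0 : ℝ), ∀ᶠ n : ℕ in atTop, c ≤ 1 - p n) :
    ∃ C > (0 : ℝ), ∀ᶠ n : ℕ in atTop,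
      |(∫ g, signedTriangles (p n) g ∂(rig n (d n) (δ n))) -
          (n.choose 3 : ℝ) * (1 - p n) ^ 3 * ((d n : ℝ) * δ n ^ 3)| ≤
        C * ((n.choose 3 : ℝ) * (1 - p n) ^ 3 * ((d n : ℝ) * δ n ^ 4)) := by
  obtain ⟨c, hc0, hcev⟩ := hpbd
  have hc0' : 0 < min c 1 := lt_min hc0 one_pos
  have hc1' : min c 1 ≤ 1 := min_le_right c 1
  refine ⟨C0 (min c 1), C0_pos hc0' hc1', ?_⟩
  filter_upwards [hcev] with n hn
  obtain ⟨hδ0, hδ1⟩ := hδ n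
  have hq : min c 1 ≤ (1 - δ n ^ 2) ^ d n := le_trans (min_le_left c 1) (hrel n ▸ hn)
  rw [expectation_eq n (d n) (p n) hδ0.le hδ1.le, hrel n]
  have key := analytic hc0' hc1' hδ0 hδ1 hq
  have e1 : (n.choose 3 : ℝ) * (((1 - δ n ^ 2) ^ d n)^3
        - 3*((1 - δ n ^ 2) ^ d n)^2*(1 - δ n ^2)^(d n)
        + 3*((1 - δ n ^ 2) ^ d n)*(1 - 2*(δ n)^2 + (δ n)^3)^(d n)
        - (1 - 3*(δ n)^2 + 2*(δ n)^3)^(d n))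
      - (n.choose 3 : ℝ) * ((1 - δ n ^ 2) ^ d n) ^ 3 * ((d n : ℝ) * δ n ^ 3)
    = (n.choose 3 : ℝ) * ((((1 - δ n ^2) ^ (d n))^3
        - 3*(((1 - δ n ^2) ^ (d n)))^2*(1 - δ n ^2)^(d n)
        + 3*(((1 - δ n ^2) ^ (d n)))*(1 - 2*(δ n)^2 + (δ n)^3)^(d n)
        - (1 - 3*(δ n)^2 + 2*(δ n)^3)^(d n)
        - (((1 - δ n ^2) ^ (d n)))^3 * ((d n : ℝ) * δ n ^ 3))) := by ring
  have e2 : C0 (min c 1) * ((n.choose 3 : ℝ) * ((1 - δ n ^ 2) ^ d n) ^ 3 * ((d n : ℝ) * δ n ^ 4))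
      = (n.choose 3 : ℝ) * (C0 (min c 1) * (((1 - δ n ^ 2) ^ d n) ^ 3 * ((d n : ℝ) * δ n ^ 4))) := by
    ring
  rw [e1, abs_mul, abs_of_nonneg (by positivity : (0:ℝ) ≤ (n.choose 3 : ℝ)), e2]
  exact mul_le_mul_of_nonneg_left key (by positivity)
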